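/- The graphon dual total correlation for three graphons, DTC = H(𝐖₁,₂,₃) - Σᵢ₌₁³ [H(𝐖₁,₂,₃) - H(𝐖_{excluding i})] = Σᵢ H(𝐖 excluding i) - 2·H(𝐖₁,₂,₃), is nonnegative and bounded above by H(𝐖₁,₂,₃). -/

import Mathlib

open MeasureTheory Real
open scoped Classical

/-- Binary entropy function. -/
noncomputable def binEnt (x : ℝ) : ℝ := -x * Real.log x - (1 - x) * Real.log (1 - x)

/-- The unit square `[0,1]²`. -/
def unitSq : Set (ℝ × ℝ) := Set.Icc 0 1 ×ˢ Set.Icc 0 1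

/-- A graphon: a symmetric measurable function with values in `[0,1]` on the unit square. -/
def IsGraphon (W : ℝ × ℝ → ℝ) : Prop :=
  Measurable W ∧ (∀ p : ℝ × ℝ, W p.swap = W p) ∧ ∀ p ∈ unitSq, W p ∈ Set.Icc (0:ℝ) 1

/-- Graphon entropy. -/
noncomputable def gEnt (W : ℝ × ℝ → ℝ) : ℝ := ∫ p in unitSq, binEnt (W p)

/-- `-x log x`. -/
noncomputable def nlog (x : ℝ) : ℝ := -(x * Real.log x)

/-- Bivariate joint graphon entropy of the system `(W1, W2, W12)`. -/
noncomputable def jEnt2 (W1 W2 W12 : ℝ × ℝ → ℝ) : ℝ :=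
  ∫ p in unitSq, (nlog (W12 p) + nlog (W1 p - W12 p) + nlog (W2 p - W12 p)
    + nlog (1 - W1 p - W2 p + W12 p))

/-- Validity (nonnegativity of all four probability entries) of the bivariate system. -/
def BivNonneg (W1 W2 W12 : ℝ × ℝ → ℝ) : Prop :=
  ∀ p ∈ unitSq, 0 ≤ W12 p ∧ 0 ≤ W1 p - W12 p ∧ 0 ≤ W2 p - W12 p ∧
    0 ≤ 1 - W1 p - W2 p + W12 p

/-- Trivariate joint graphon entropy. -/
noncomputable def jEnt3 (W1 W2 W3 W12 W13 W23 W123 : ℝ × ℝ → ℝ) : ℝ :=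
  ∫ p in unitSq, (nlog (W123 p) + nlog (W12 p - W123 p) + nlog (W13 p - W123 p)
    + nlog (W23 p - W123 p)
    + nlog (W1 p - W12 p - W13 p + W123 p) + nlog (W2 p - W12 p - W23 p + W123 p)
    + nlog (W3 p - W13 p - W23 p + W123 p)
    + nlog (1 - W1 p - W2 p - W3 p + W12 p + W13 p + W23 p - W123 p))

/-- Validity (nonnegativity of all eight probability entries) of the trivariate system. -/
def TriNonneg (W1 W2 W3 W12 W13 W23 W123 : ℝ × ℝ → ℝ) : Prop :=
  ∀ p ∈ unitSq, 0 ≤ W123 p ∧ 0 ≤ W12 p - W123 p ∧ 0 ≤ W13 p - W123 p ∧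
    0 ≤ W23 p - W123 p ∧ 0 ≤ W1 p - W12 p - W13 p + W123 p ∧
    0 ≤ W2 p - W12 p - W23 p + W123 p ∧ 0 ≤ W3 p - W13 p - W23 p + W123 p ∧
    0 ≤ 1 - W1 p - W2 p - W3 p + W12 p + W13 p + W23 p - W123 p

lemma measurable_nlog : Measurable nlog := (measurable_id.mul Real.measurable_log).neg

lemma nlog_nonneg {x : ℝ} (h0 : 0 ≤ x) (h1 : x ≤ 1) : 0 ≤ nlog x := by
  have := Real.log_nonpos h0 h1
  unfold nlog; nlinarith

lemma nlog_le_one {x : ℝ} (h0 : 0 ≤ x) : nlog x ≤ 1 := by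
  rcases eq_or_lt_of_le h0 with h | h
  · simp [nlog, ← h]
  · have hx : 0 < x⁻¹ := by positivity
    have := Real.log_le_sub_one_of_pos hx
    rw [Real.log_inv] at this
    unfold nlog
    have hxx : x * x⁻¹ = 1 := mul_inv_cancel₀ (ne_of_gt h)
    nlinarith

lemma term_lb {p r c S : ℝ} (hp : 0 ≤ p) (hpr : p ≤ r) (hpc : p ≤ c)
    (hS : 0 < S) :
    p - r * c / S ≤ p * Real.log p + p * Real.log S - p * Real.log r - p * Real.log c := by
  rcases eq_or_lt_of_le hp with h | h
  · have hr : 0 ≤ r := le_trans hp hpr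
    have hc : 0 ≤ c := le_trans hp hpc
    simp only [← h, zero_mul, zero_sub, sub_zero, neg_zero, add_zero, zero_add]
    have : 0 ≤ r * c / S := by positivity
    linarith
  · have hr : 0 < r := lt_of_lt_of_le h hpr
    have hc : 0 < c := lt_of_lt_of_le h hpc
    have hx : 0 < r * c / (p * S) := by positivity
    have hl := Real.log_le_sub_one_of_pos hx
    rw [Real.log_div (by positivity) (by positivity), Real.log_mul (ne_of_gt hr) (ne_of_gt hc),
      Real.log_mul (ne_of_gt h) (ne_of_gt hS)] at hl
    have h2 : p * (r * c / (p * S)) = r * c / S := by field_simp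
    nlinarith [mul_le_mul_of_nonneg_left hl hp]

lemma lemA {u v w z r1 r2 c1 c2 S : ℝ}
    (hu : 0 ≤ u) (hv : 0 ≤ v) (hw : 0 ≤ w) (hz : 0 ≤ z)
    (hr1 : r1 = u + v) (hr2 : r2 = w + z) (hc1 : c1 = u + w) (hc2 : c2 = v + z)
    (hS : S = u + v + w + z) :
    nlog u + nlog v + nlog w + nlog z + nlog S ≤ nlog r1 + nlog r2 + nlog c1 + nlog c2 := by
  subst hr1 hr2 hc1 hc2 hS
  rcases eq_or_lt_of_le (by linarith : (0:ℝ) ≤ u + v + w + z) with h | h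
  · have hu0 : u = 0 := by linarith
    have hv0 : v = 0 := by linarith
    have hw0 : w = 0 := by linarith
    have hz0 : z = 0 := by linarith
    simp [hu0, hv0, hw0, hz0, nlog]
  · have tu := term_lb hu (by linarith : u ≤ u + v) (by linarith : u ≤ u + w) h
    have tv := term_lb hv (by linarith : v ≤ u + v) (by linarith : v ≤ v + z) h
    have tw := term_lb hw (by linarith : w ≤ w + z) (by linarith : w ≤ u + w) h
    have tz := term_lb hz (by linarith : z ≤ w + z) (by linarith : z ≤ v + z) h
    have key : (u + v) * (u + w) / (u + v + w + z) + (u + v) * (v + z) / (u + v + w + z)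
        + (w + z) * (u + w) / (u + v + w + z) + (w + z) * (v + z) / (u + v + w + z)
        = u + v + w + z := by
      field_simp
      ring
    unfold nlog
    ring_nf
    ring_nf at tu tv tw tz key
    linarith

lemma nlog_split {a b c : ℝ} (hb : 0 ≤ b) (hc : 0 ≤ c) (h : a = b + c) :
    nlog a ≤ nlog b + nlog c := by
  subst h
  have h1 : b * Real.log b ≤ b * Real.log (b + c) := by
    rcases eq_or_lt_of_le hb with h | h
    · simp [← h]
    · exact mul_le_mul_of_nonneg_left (Real.log_le_log h (by linarith)) hb
  have h2 : c * Real.log c ≤ c * Real.log (b + c) := by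
    rcases eq_or_lt_of_le hc with h | h
    · simp [← h]
    · exact mul_le_mul_of_nonneg_left (Real.log_le_log h (by linarith)) hc
  unfold nlog
  nlinarith

lemma pt_lower (w1 w2 w3 w12 w13 w23 w123 : ℝ)
    (h1 : 0 ≤ w123) (h2 : 0 ≤ w12 - w123) (h3 : 0 ≤ w13 - w123) (h4 : 0 ≤ w23 - w123)
    (h5 : 0 ≤ w1 - w12 - w13 + w123) (h6 : 0 ≤ w2 - w12 - w23 + w123)
    (h7 : 0 ≤ w3 - w13 - w23 + w123)
    (h8 : 0 ≤ 1 - w1 - w2 - w3 + w12 + w13 + w23 - w123) :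
    2 * (nlog w123 + nlog (w12 - w123) + nlog (w13 - w123) + nlog (w23 - w123)
      + nlog (w1 - w12 - w13 + w123) + nlog (w2 - w12 - w23 + w123)
      + nlog (w3 - w13 - w23 + w123)
      + nlog (1 - w1 - w2 - w3 + w12 + w13 + w23 - w123))
    ≤ (nlog w23 + nlog (w2 - w23) + nlog (w3 - w23) + nlog (1 - w2 - w3 + w23))
    + (nlog w13 + nlog (w1 - w13) + nlog (w3 - w13) + nlog (1 - w1 - w3 + w13))
    + (nlog w12 + nlog (w1 - w12) + nlog (w2 - w12) + nlog (1 - w1 - w2 + w12)) := by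
  have As1 := lemA (u := w123) (v := w13 - w123) (w := w23 - w123) (z := w3 - w13 - w23 + w123)
    (r1 := w13) (r2 := w3 - w13) (c1 := w23) (c2 := w3 - w23) (S := w3)
    h1 h3 h4 h7 (by ring) (by ring) (by ring) (by ring) (by ring)
  have As0 := lemA (u := w12 - w123) (v := w1 - w12 - w13 + w123) (w := w2 - w12 - w23 + w123)
    (z := 1 - w1 - w2 - w3 + w12 + w13 + w23 - w123)
    (r1 := w1 - w13) (r2 := 1 - w1 - w3 + w13) (c1 := w2 - w23) (c2 := 1 - w2 - w3 + w23)
    (S := 1 - w3)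
    h2 h5 h6 h8 (by ring) (by ring) (by ring) (by ring) (by ring)
  have A1 := lemA (u := w23) (v := w2 - w23) (w := w3 - w23) (z := 1 - w2 - w3 + w23)
    (r1 := w2) (r2 := 1 - w2) (c1 := w3) (c2 := 1 - w3) (S := 1)
    (by linarith) (by linarith) (by linarith) (by linarith)
    (by ring) (by ring) (by ring) (by ring) (by ring)
  have A2 := lemA (u := w123) (v := w12 - w123) (w := w23 - w123) (z := w2 - w12 - w23 + w123)
    (r1 := w12) (r2 := w2 - w12) (c1 := w23) (c2 := w2 - w23) (S := w2)
    h1 h2 h4 h6 (by ring) (by ring) (by ring) (by ring) (by ring)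
  have A3 := lemA (u := w13 - w123) (v := w1 - w12 - w13 + w123) (w := w3 - w13 - w23 + w123)
    (z := 1 - w1 - w2 - w3 + w12 + w13 + w23 - w123)
    (r1 := w1 - w12) (r2 := 1 - w1 - w2 + w12) (c1 := w3 - w23) (c2 := 1 - w2 - w3 + w23)
    (S := 1 - w2)
    h3 h5 h7 h8 (by ring) (by ring) (by ring) (by ring) (by ring)
  have hn1 : nlog 1 = 0 := by simp [nlog]
  linarith

lemma pt_upper (w1 w2 w3 w12 w13 w23 w123 : ℝ)
    (h1 : 0 ≤ w123) (h2 : 0 ≤ w12 - w123) (h3 : 0 ≤ w13 - w123) (h4 : 0 ≤ w23 - w123)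
    (h5 : 0 ≤ w1 - w12 - w13 + w123) (h6 : 0 ≤ w2 - w12 - w23 + w123)
    (h7 : 0 ≤ w3 - w13 - w23 + w123)
    (h8 : 0 ≤ 1 - w1 - w2 - w3 + w12 + w13 + w23 - w123) :
    (nlog w23 + nlog (w2 - w23) + nlog (w3 - w23) + nlog (1 - w2 - w3 + w23))
    + (nlog w13 + nlog (w1 - w13) + nlog (w3 - w13) + nlog (1 - w1 - w3 + w13))
    + (nlog w12 + nlog (w1 - w12) + nlog (w2 - w12) + nlog (1 - w1 - w2 + w12))
    ≤ 3 * (nlog w123 + nlog (w12 - w123) + nlog (w13 - w123) + nlog (w23 - w123)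
      + nlog (w1 - w12 - w13 + w123) + nlog (w2 - w12 - w23 + w123)
      + nlog (w3 - w13 - w23 + w123)
      + nlog (1 - w1 - w2 - w3 + w12 + w13 + w23 - w123)) := by
  have s1 := nlog_split (a := w12) h1 h2 (by ring)
  have s2 := nlog_split (a := w1 - w12) h3 h5 (by ring)
  have s3 := nlog_split (a := w2 - w12) h4 h6 (by ring)
  have s4 := nlog_split (a := 1 - w1 - w2 + w12) h7 h8 (by ring)
  have s5 := nlog_split (a := w13) h1 h3 (by ring)
  have s6 := nlog_split (a := w1 - w13) h2 h5 (by ring)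
  have s7 := nlog_split (a := w3 - w13) h4 h7 (by ring)
  have s8 := nlog_split (a := 1 - w1 - w3 + w13) h6 h8 (by ring)
  have s9 := nlog_split (a := w23) h1 h4 (by ring)
  have s10 := nlog_split (a := w2 - w23) h2 h6 (by ring)
  have s11 := nlog_split (a := w3 - w23) h3 h7 (by ring)
  have s12 := nlog_split (a := 1 - w2 - w3 + w23) h5 h8 (by ring)
  linarith

lemma unitSq_measurableSet : MeasurableSet unitSq := measurableSet_Icc.prod measurableSet_Icc

lemma integrableOn_unitSq_of_bounded {g : ℝ × ℝ → ℝ} (hg : Measurable g)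
    (hb : ∀ p ∈ unitSq, |g p| ≤ 8) : IntegrableOn g unitSq := by
  refine Measure.integrableOn_of_bounded (M := 8)
    (ne_of_lt ((isCompact_Icc.prod isCompact_Icc).measure_lt_top)) hg.aestronglyMeasurable ?_
  exact (ae_restrict_iff' unitSq_measurableSet).2
    (ae_of_all _ fun p hp => by simpa [Real.norm_eq_abs] using hb p hp)

theorem graphon_dual_total_correlation_bounds
    (W1 W2 W3 W12 W13 W23 W123 : ℝ × ℝ → ℝ)
    (hG1 : IsGraphon W1) (hG2 : IsGraphon W2) (hG3 : IsGraphon W3)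
    (hG12 : IsGraphon W12) (hG13 : IsGraphon W13) (hG23 : IsGraphon W23)
    (hG123 : IsGraphon W123)
    (hnn : TriNonneg W1 W2 W3 W12 W13 W23 W123) :
    0 ≤ jEnt2 W2 W3 W23 + jEnt2 W1 W3 W13 + jEnt2 W1 W2 W12
        - 2 * jEnt3 W1 W2 W3 W12 W13 W23 W123 ∧
    jEnt2 W2 W3 W23 + jEnt2 W1 W3 W13 + jEnt2 W1 W2 W12
        - 2 * jEnt3 W1 W2 W3 W12 W13 W23 W123
      ≤ jEnt3 W1 W2 W3 W12 W13 W23 W123 := by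
  obtain ⟨m1, -, -⟩ := hG1
  obtain ⟨m2, -, -⟩ := hG2
  obtain ⟨m3, -, -⟩ := hG3
  obtain ⟨m12, -, -⟩ := hG12
  obtain ⟨m13, -, -⟩ := hG13
  obtain ⟨m23, -, -⟩ := hG23
  obtain ⟨m123, -, -⟩ := hG123
  set f3 : ℝ × ℝ → ℝ := fun p =>
    nlog (W123 p) + nlog (W12 p - W123 p) + nlog (W13 p - W123 p) + nlog (W23 p - W123 p)
      + nlog (W1 p - W12 p - W13 p + W123 p) + nlog (W2 p - W12 p - W23 p + W123 p)
      + nlog (W3 p - W13 p - W23 p + W123 p)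
      + nlog (1 - W1 p - W2 p - W3 p + W12 p + W13 p + W23 p - W123 p) with hf3
  set g23 : ℝ × ℝ → ℝ := fun p =>
    nlog (W23 p) + nlog (W2 p - W23 p) + nlog (W3 p - W23 p)
      + nlog (1 - W2 p - W3 p + W23 p) with hg23
  set g13 : ℝ × ℝ → ℝ := fun p =>
    nlog (W13 p) + nlog (W1 p - W13 p) + nlog (W3 p - W13 p)
      + nlog (1 - W1 p - W3 p + W13 p) with hg13
  set g12 : ℝ × ℝ → ℝ := fun p =>
    nlog (W12 p) + nlog (W1 p - W12 p) + nlog (W2 p - W12 p)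
      + nlog (1 - W1 p - W2 p + W12 p) with hg12
  have e3 : jEnt3 W1 W2 W3 W12 W13 W23 W123 = ∫ p in unitSq, f3 p := rfl
  have e23 : jEnt2 W2 W3 W23 = ∫ p in unitSq, g23 p := rfl
  have e13 : jEnt2 W1 W3 W13 = ∫ p in unitSq, g13 p := rfl
  have e12 : jEnt2 W1 W2 W12 = ∫ p in unitSq, g12 p := rfl
  -- measurability
  have mf3 : Measurable f3 := by
    apply Measurable.add
    apply Measurable.add
    apply Measurable.add
    apply Measurable.add
    apply Measurable.add
    apply Measurable.add
    apply Measurable.add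
    · exact measurable_nlog.comp m123
    · exact measurable_nlog.comp (m12.sub m123)
    · exact measurable_nlog.comp (m13.sub m123)
    · exact measurable_nlog.comp (m23.sub m123)
    · exact measurable_nlog.comp (((m1.sub m12).sub m13).add m123)
    · exact measurable_nlog.comp (((m2.sub m12).sub m23).add m123)
    · exact measurable_nlog.comp (((m3.sub m13).sub m23).add m123)
    · exact measurable_nlog.comp
        ((((((measurable_const.sub m1).sub m2).sub m3).add m12).add m13).add m23 |>.sub m123)
  have mg23 : Measurable g23 := by
    apply Measurable.add
    apply Measurable.add
    apply Measurable.add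
    · exact measurable_nlog.comp m23
    · exact measurable_nlog.comp (m2.sub m23)
    · exact measurable_nlog.comp (m3.sub m23)
    · exact measurable_nlog.comp (((measurable_const.sub m2).sub m3).add m23)
  have mg13 : Measurable g13 := by
    apply Measurable.add
    apply Measurable.add
    apply Measurable.add
    · exact measurable_nlog.comp m13
    · exact measurable_nlog.comp (m1.sub m13)
    · exact measurable_nlog.comp (m3.sub m13)
    · exact measurable_nlog.comp (((measurable_const.sub m1).sub m3).add m13)
  have mg12 : Measurable g12 := by
    apply Measurable.add
    apply Measurable.add
    apply Measurable.add
    · exact measurable_nlog.comp m12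
    · exact measurable_nlog.comp (m1.sub m12)
    · exact measurable_nlog.comp (m2.sub m12)
    · exact measurable_nlog.comp (((measurable_const.sub m1).sub m2).add m12)
  -- bounds
  have bf3 : ∀ p ∈ unitSq, |f3 p| ≤ 8 := by
    intro p hp
    obtain ⟨n1, n2, n3, n4, n5, n6, n7, n8⟩ := hnn p hp
    have b1 : 0 ≤ nlog (W123 p) ∧ nlog (W123 p) ≤ 1 :=
      ⟨nlog_nonneg n1 (by linarith), nlog_le_one n1⟩
    have b2 : 0 ≤ nlog (W12 p - W123 p) ∧ nlog (W12 p - W123 p) ≤ 1 :=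
      ⟨nlog_nonneg n2 (by linarith), nlog_le_one n2⟩
    have b3 : 0 ≤ nlog (W13 p - W123 p) ∧ nlog (W13 p - W123 p) ≤ 1 :=
      ⟨nlog_nonneg n3 (by linarith), nlog_le_one n3⟩
    have b4 : 0 ≤ nlog (W23 p - W123 p) ∧ nlog (W23 p - W123 p) ≤ 1 :=
      ⟨nlog_nonneg n4 (by linarith), nlog_le_one n4⟩
    have b5 : 0 ≤ nlog (W1 p - W12 p - W13 p + W123 p) ∧
        nlog (W1 p - W12 p - W13 p + W123 p) ≤ 1 :=
      ⟨nlog_nonneg n5 (by linarith), nlog_le_one n5⟩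
    have b6 : 0 ≤ nlog (W2 p - W12 p - W23 p + W123 p) ∧
        nlog (W2 p - W12 p - W23 p + W123 p) ≤ 1 :=
      ⟨nlog_nonneg n6 (by linarith), nlog_le_one n6⟩
    have b7 : 0 ≤ nlog (W3 p - W13 p - W23 p + W123 p) ∧
        nlog (W3 p - W13 p - W23 p + W123 p) ≤ 1 :=
      ⟨nlog_nonneg n7 (by linarith), nlog_le_one n7⟩
    have b8 : 0 ≤ nlog (1 - W1 p - W2 p - W3 p + W12 p + W13 p + W23 p - W123 p) ∧
        nlog (1 - W1 p - W2 p - W3 p + W12 p + W13 p + W23 p - W123 p) ≤ 1 :=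
      ⟨nlog_nonneg n8 (by linarith), nlog_le_one n8⟩
    rw [hf3]
    rw [abs_le]
    constructor <;> [skip; skip] <;>
      · simp only
        obtain ⟨c1, d1⟩ := b1; obtain ⟨c2, d2⟩ := b2; obtain ⟨c3, d3⟩ := b3
        obtain ⟨c4, d4⟩ := b4; obtain ⟨c5, d5⟩ := b5; obtain ⟨c6, d6⟩ := b6
        obtain ⟨c7, d7⟩ := b7; obtain ⟨c8, d8⟩ := b8
        linarith
  have bg23 : ∀ p ∈ unitSq, |g23 p| ≤ 8 := by
    intro p hp
    obtain ⟨n1, n2, n3, n4, n5, n6, n7, n8⟩ := hnn p hp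
    have c1 : 0 ≤ W23 p := by linarith
    have c2 : 0 ≤ W2 p - W23 p := by linarith
    have c3 : 0 ≤ W3 p - W23 p := by linarith
    have c4 : 0 ≤ 1 - W2 p - W3 p + W23 p := by linarith
    have b1 := And.intro (nlog_nonneg c1 (by linarith)) (nlog_le_one c1)
    have b2 := And.intro (nlog_nonneg c2 (by linarith)) (nlog_le_one c2)
    have b3 := And.intro (nlog_nonneg c3 (by linarith)) (nlog_le_one c3)
    have b4 := And.intro (nlog_nonneg c4 (by linarith)) (nlog_le_one c4)
    rw [hg23, abs_le]
    exact ⟨by simp only; linarith [b1.1, b2.1, b3.1, b4.1],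
      by simp only; linarith [b1.2, b2.2, b3.2, b4.2]⟩
  have bg13 : ∀ p ∈ unitSq, |g13 p| ≤ 8 := by
    intro p hp
    obtain ⟨n1, n2, n3, n4, n5, n6, n7, n8⟩ := hnn p hp
    have c1 : 0 ≤ W13 p := by linarith
    have c2 : 0 ≤ W1 p - W13 p := by linarith
    have c3 : 0 ≤ W3 p - W13 p := by linarith
    have c4 : 0 ≤ 1 - W1 p - W3 p + W13 p := by linarith
    have b1 := And.intro (nlog_nonneg c1 (by linarith)) (nlog_le_one c1)
    have b2 := And.intro (nlog_nonneg c2 (by linarith)) (nlog_le_one c2)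
    have b3 := And.intro (nlog_nonneg c3 (by linarith)) (nlog_le_one c3)
    have b4 := And.intro (nlog_nonneg c4 (by linarith)) (nlog_le_one c4)
    rw [hg13, abs_le]
    exact ⟨by simp only; linarith [b1.1, b2.1, b3.1, b4.1],
      by simp only; linarith [b1.2, b2.2, b3.2, b4.2]⟩
  have bg12 : ∀ p ∈ unitSq, |g12 p| ≤ 8 := by
    intro p hp
    obtain ⟨n1, n2, n3, n4, n5, n6, n7, n8⟩ := hnn p hp
    have c1 : 0 ≤ W12 p := by linarith
    have c2 : 0 ≤ W1 p - W12 p := by linarith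
    have c3 : 0 ≤ W2 p - W12 p := by linarith
    have c4 : 0 ≤ 1 - W1 p - W2 p + W12 p := by linarith
    have b1 := And.intro (nlog_nonneg c1 (by linarith)) (nlog_le_one c1)
    have b2 := And.intro (nlog_nonneg c2 (by linarith)) (nlog_le_one c2)
    have b3 := And.intro (nlog_nonneg c3 (by linarith)) (nlog_le_one c3)
    have b4 := And.intro (nlog_nonneg c4 (by linarith)) (nlog_le_one c4)
    rw [hg12, abs_le]
    exact ⟨by simp only; linarith [b1.1, b2.1, b3.1, b4.1],
      by simp only; linarith [b1.2, b2.2, b3.2, b4.2]⟩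
  have if3 : IntegrableOn f3 unitSq := integrableOn_unitSq_of_bounded mf3 bf3
  have ig23 : IntegrableOn g23 unitSq := integrableOn_unitSq_of_bounded mg23 bg23
  have ig13 : IntegrableOn g13 unitSq := integrableOn_unitSq_of_bounded mg13 bg13
  have ig12 : IntegrableOn g12 unitSq := integrableOn_unitSq_of_bounded mg12 bg12
  have isum : Integrable (fun p => g23 p + g13 p + g12 p) (volume.restrict unitSq) :=
    (ig23.add ig13).add ig12
  have esum : ∫ p in unitSq, (g23 p + g13 p + g12 p)
      = (∫ p in unitSq, g23 p) + (∫ p in unitSq, g13 p) + (∫ p in unitSq, g12 p) := by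
    have h1 : Integrable (fun p => g23 p + g13 p) (volume.restrict unitSq) := ig23.add ig13
    rw [integral_add h1 ig12, integral_add ig23 ig13]
  constructor
  · have hmono : ∫ p in unitSq, 2 * f3 p ≤ ∫ p in unitSq, (g23 p + g13 p + g12 p) := by
      refine setIntegral_mono_on (if3.const_mul 2) isum unitSq_measurableSet ?_
      intro p hp
      obtain ⟨n1, n2, n3, n4, n5, n6, n7, n8⟩ := hnn p hp
      simp only [hf3, hg23, hg13, hg12]
      exact pt_lower (W1 p) (W2 p) (W3 p) (W12 p) (W13 p) (W23 p) (W123 p)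
        n1 n2 n3 n4 n5 n6 n7 n8
    rw [integral_const_mul] at hmono
    rw [esum] at hmono
    rw [e3, e23, e13, e12]
    linarith
  · have hmono : ∫ p in unitSq, (g23 p + g13 p + g12 p) ≤ ∫ p in unitSq, 3 * f3 p := by
      refine setIntegral_mono_on isum (if3.const_mul 3) unitSq_measurableSet ?_
      intro p hp
      obtain ⟨n1, n2, n3, n4, n5, n6, n7, n8⟩ := hnn p hp
      simp only [hf3, hg23, hg13, hg12]
      exact pt_upper (W1 p) (W2 p) (W3 p) (W12 p) (W13 p) (W23 p) (W123 p)
        n1 n2 n3 n4 n5 n6 n7 n8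
    rw [integral_const_mul] at hmono
    rw [esum] at hmono
    rw [e3, e23, e13, e12]
    linarith
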